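/- arXiv:1803.09291 — 6 statements merged into one kernel-verified Lean document; each statement's English description precedes it below -/
import Mathlib

section
/- Let p be a prime and A a p-primary torsion abelian group of cofinite type. Then A is artinian: every decreasing sequence A ⊇ A₀ ⊇ A₁ ⊇ ⋯ of subgroups of A stabilizes. -/
/-- A `p`-primary torsion abelian group of cofinite type is artinian: every
decreasing sequence of subgroups stabilizes. -/
theorem stmt_4 (p : ℕ) (hp : p.Prime) (A : Type*) [AddCommGroup A]
    (hprim : ∀ a : A, ∃ n : ℕ, ((p : ℤ) ^ n) • a = 0)
    (hcof : ∀ n : ℕ, Finite ((smulAddHom ℤ A ((p : ℤ) ^ n)).ker))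
    (C : ℕ → AddSubgroup A) (hdec : ∀ n, C (n + 1) ≤ C n) :
    ∃ n, ∀ m, n ≤ m → C m = C n := by
  classical
  -- the torsion filtration
  set T : ℕ → AddSubgroup A := fun k => (smulAddHom ℤ A ((p : ℤ) ^ k)).ker with hT
  have hTmem : ∀ (k : ℕ) (x : A), x ∈ T k ↔ ((p : ℤ) ^ k) • x = 0 := by
    intro k x
    simp [hT, AddMonoidHom.mem_ker]
  have hTfin : ∀ k, Finite (T k) := hcof
  have hTmono : ∀ {j k : ℕ}, j ≤ k → T j ≤ T k := by
    intro j k hjk x hx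
    obtain ⟨d, rfl⟩ := Nat.exists_eq_add_of_le hjk
    rw [hTmem] at hx ⊢
    have : ((p : ℤ) ^ (j + d)) • x = ((p : ℤ) ^ d) • (((p : ℤ) ^ j) • x) := by
      rw [smul_smul, ← pow_add]
      ring_nf
    rw [this, hx, smul_zero]
  have hanti : Antitone C := antitone_nat_of_succ_le hdec
  -- stabilization of decreasing sequences of subgroups of a finite subgroup
  have stab : ∀ (v : ℕ → AddSubgroup A) (F : AddSubgroup A), Finite F →
      (∀ n, v n ≤ F) → Antitone v → ∃ n, ∀ m, n ≤ m → v m = v n := by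
    intro v F hF hle hv
    haveI : ∀ n, Finite (v n) := fun n =>
      Finite.of_injective _ (AddSubgroup.inclusion_injective (hle n))
    obtain ⟨n, hn⟩ : ∃ n, Nat.card (v n) = sInf (Set.range fun n => Nat.card (v n)) := by
      have h1 : (Set.range fun n => Nat.card (v n)).Nonempty := ⟨Nat.card (v 0), 0, rfl⟩
      obtain ⟨n, hn⟩ := Nat.sInf_mem h1
      exact ⟨n, hn.symm ▸ hn⟩
    refine ⟨n, fun m hm => ?_⟩
    have h1 : v m ≤ v n := hv hm
    have h2 : Nat.card (v n) ≤ Nat.card (v m) := by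
      rw [hn]; exact Nat.sInf_le ⟨m, rfl⟩
    exact AddSubgroup.eq_of_le_of_card_ge h1 h2
  -- the "rank measuring" subgroups
  set U : AddSubgroup A → ℕ → AddSubgroup A :=
    fun B k => (B ⊓ T (k + 1)).map (smulAddHom ℤ A ((p : ℤ) ^ k)) with hU
  have hUmem : ∀ (B : AddSubgroup A) (k : ℕ) (x : A),
      x ∈ U B k ↔ ∃ y, (y ∈ B ∧ ((p : ℤ) ^ (k + 1)) • y = 0) ∧ ((p : ℤ) ^ k) • y = x := by
    intro B k x
    simp [hU, AddSubgroup.mem_map, AddSubgroup.mem_inf, hTmem]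
  -- U B k is contained in the finite group T 1
  have hUF : ∀ (B : AddSubgroup A) (k : ℕ), U B k ≤ T 1 := by
    intro B k x hx
    rw [hUmem] at hx
    obtain ⟨y, ⟨-, hy2⟩, rfl⟩ := hx
    rw [hTmem, smul_smul, ← pow_add]
    rw [show 1 + k = k + 1 by ring]
    exact hy2
  -- U B is antitone in k
  have hUk : ∀ (B : AddSubgroup A) (k : ℕ), U B (k + 1) ≤ U B k := by
    intro B k x hx
    rw [hUmem] at hx
    obtain ⟨y, ⟨hy1, hy2⟩, rfl⟩ := hx
    rw [hUmem]
    refine ⟨(p : ℤ) • y, ⟨zsmul_mem hy1 _, ?_⟩, ?_⟩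
    · rw [smul_smul, ← pow_succ]
      exact hy2
    · rw [smul_smul, ← pow_succ]
  have hUk' : ∀ (B : AddSubgroup A) {j k : ℕ}, j ≤ k → U B k ≤ U B j := by
    intro B j k hjk
    obtain ⟨d, rfl⟩ := Nat.exists_eq_add_of_le hjk
    induction d with
    | zero => exact le_rfl
    | succ d ih => exact le_trans (hUk B (j + d)) (ih (Nat.le_add_right _ _))
  -- U B is monotone in B
  have hUB : ∀ {D B : AddSubgroup A} (k : ℕ), D ≤ B → U D k ≤ U B k := by
    intro D B k h
    exact AddSubgroup.map_mono (inf_le_inf_right _ h)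
  -- key recovery lemma
  have P4 : ∀ (D B : AddSubgroup A) (k : ℕ), D ≤ B → U B k ≤ U D k →
      ∀ x, x ∈ B → x ∈ T (k + 1) → ∃ d ∈ D, x - d ∈ B ∧ x - d ∈ T k := by
    intro D B k hDB hUle x hxB hxT
    have hx : ((p : ℤ) ^ k) • x ∈ U B k := by
      rw [hUmem]
      exact ⟨x, ⟨hxB, (hTmem _ _).1 hxT⟩, rfl⟩
    have hx' := hUle hx
    rw [hUmem] at hx'
    obtain ⟨y, ⟨hy1, -⟩, hy3⟩ := hx'
    refine ⟨y, hy1, sub_mem hxB (hDB hy1), ?_⟩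
    rw [hTmem, smul_sub, hy3, sub_self]
  -- diagonal sequence stabilizes
  have hvanti : Antitone (fun n => U (C n) n) := by
    apply antitone_nat_of_succ_le
    intro n
    exact le_trans (hUk (C (n + 1)) n) (hUB n (hdec n))
  obtain ⟨n₀, hn₀⟩ := stab (fun n => U (C n) n) (T 1) (hTfin 1) (fun n => hUF _ _) hvanti
  -- hence U (C m) k is constant for m, k ≥ n₀
  have hUeq : ∀ m k, n₀ ≤ m → n₀ ≤ k → U (C m) k = U (C n₀) n₀ := by
    intro m k hm hk
    apply le_antisymm
    · exact le_trans (hUk' (C m) hk) (hUB n₀ (hanti hm))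
    · have h1 : U (C (max m k)) (max m k) = U (C n₀) n₀ := hn₀ _ (le_trans hm (le_max_left m k))
      calc U (C n₀) n₀ = U (C (max m k)) (max m k) := h1.symm
        _ ≤ U (C m) (max m k) := hUB _ (hanti (le_max_left m k))
        _ ≤ U (C m) k := hUk' _ (le_max_right m k)
  -- stabilize the small torsion parts
  have hwanti : Antitone (fun n => C (n₀ + n) ⊓ T n₀) := by
    intro a b hab
    exact inf_le_inf_right _ (hanti (by omega))
  obtain ⟨n₁, hn₁⟩ := stab (fun n => C (n₀ + n) ⊓ T n₀) (T n₀) (hTfin n₀)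
    (fun n => inf_le_right) hwanti
  refine ⟨n₀ + n₁, fun m hm => ?_⟩
  apply le_antisymm (hanti hm)
  -- now show C (n₀ + n₁) ≤ C m
  intro x hx
  have hmn₀ : n₀ ≤ m := by omega
  have hxC : x ∈ C n₀ := hanti (by omega) hx
  -- descend through the torsion filtration
  have key : ∀ (j : ℕ) (z : A), z ∈ C n₀ → z ∈ T (n₀ + j) →
      ∃ d ∈ C m, z - d ∈ C n₀ ∧ z - d ∈ T n₀ := by
    intro j
    induction j with
    | zero =>
      intro z hz1 hz2
      exact ⟨0, zero_mem _, by simpa using hz1, by simpa using hz2⟩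
    | succ j ih =>
      intro z hz1 hz2
      have hUe : U (C n₀) (n₀ + j) ≤ U (C m) (n₀ + j) := by
        rw [hUeq m (n₀ + j) hmn₀ (by omega), hUeq n₀ (n₀ + j) le_rfl (by omega)]
      obtain ⟨d₁, hd₁, hz3, hz4⟩ := P4 (C m) (C n₀) (n₀ + j) (hanti hmn₀) hUe z hz1 hz2
      obtain ⟨d₂, hd₂, hz5, hz6⟩ := ih (z - d₁) hz3 hz4
      refine ⟨d₁ + d₂, add_mem hd₁ hd₂, ?_, ?_⟩
      · rwa [sub_add_eq_sub_sub]
      · rwa [sub_add_eq_sub_sub]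
  obtain ⟨K, hK⟩ := hprim x
  have hxT : x ∈ T (n₀ + K) := hTmono (by omega) ((hTmem K x).2 hK)
  obtain ⟨d, hd, hz5, hz6⟩ := key K x hxC hxT
  -- x - d lies in C (n₀ + n₁) ⊓ T n₀ = C m ⊓ T n₀
  obtain ⟨m', rfl⟩ : ∃ m', m = n₀ + m' := ⟨m - n₀, by omega⟩
  have hm' : n₁ ≤ m' := by omega
  have hxd : x - d ∈ C (n₀ + n₁) ⊓ T n₀ :=
    AddSubgroup.mem_inf.2 ⟨sub_mem hx (hanti hm hd), hz6⟩
  have heq : C (n₀ + m') ⊓ T n₀ = C (n₀ + n₁) ⊓ T n₀ := hn₁ m' hm'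
  rw [← heq] at hxd
  have : x - d ∈ C (n₀ + m') := (AddSubgroup.mem_inf.1 hxd).1
  have := add_mem hd this
  rwa [add_sub_cancel] at this
end

section
/- Let B be an abelian group and consider the inverse system indexed by the positive integers ordered by divisibility, whose objects are all equal to B and whose transition map from the index mn to the index n is multiplication by m. This system satisfies the Mittag-Leffler condition if and only if B has a divisible subgroup B' such that B/B' is killed by multiplication by some positive integer. -/
/-- For an abelian group `B`, consider the inverse system indexed by positive
integers ordered by divisibility, all of whose objects are `B`, with transition map from index
`m*n` to index `n` given by multiplication by `m`. The image in the index-`i` copy of `B` of the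
map from the index `i*m` is `mB`, so the Mittag-Leffler condition says: for each index, the
images `jB` stabilize along divisibility. This holds iff `B` has a divisible subgroup `B'`
with `B/B'` killed by multiplication by some positive integer. -/
theorem stmt_10 (B : Type*) [AddCommGroup B] :
    (∀ i : ℕ, 0 < i → ∃ j : ℕ, 0 < j ∧ ∀ k : ℕ, 0 < k →
      (smulAddHom ℤ B ((j * k : ℕ) : ℤ)).range = (smulAddHom ℤ B ((j : ℕ) : ℤ)).range) ↔
    ∃ B' : AddSubgroup B, (∀ n : ℕ, 0 < n → ∀ x ∈ B', ∃ y ∈ B', (n : ℤ) • y = x) ∧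
      ∃ N : ℕ, 0 < N ∧ ∀ b : B, (N : ℤ) • b ∈ B' := by
  constructor
  · intro h
    obtain ⟨j, hj, hjk⟩ := h 1 one_pos
    refine ⟨(smulAddHom ℤ B ((j : ℕ) : ℤ)).range, ?_, j, hj, ?_⟩
    · rintro n hn x hx
      obtain ⟨b, hb⟩ := hx
      have hx' : x ∈ (smulAddHom ℤ B ((j * n : ℕ) : ℤ)).range := by
        rw [hjk n hn]; exact ⟨b, hb⟩
      obtain ⟨c, hc⟩ := hx'
      refine ⟨(j : ℤ) • c, ⟨c, rfl⟩, ?_⟩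
      simp only [smulAddHom_apply] at hc ⊢
      rw [← hc, smul_smul]
      push_cast
      ring_nf
    · intro b
      exact ⟨b, rfl⟩
  · rintro ⟨B', hdiv, N, hN, hNB⟩
    intro i _
    refine ⟨N, hN, fun k hk => ?_⟩
    apply le_antisymm
    · rintro x ⟨b, hb⟩
      refine ⟨(k : ℤ) • b, ?_⟩
      simp only [smulAddHom_apply] at hb ⊢
      rw [← hb, smul_smul]
      push_cast
      ring_nf
    · rintro x ⟨b, hb⟩
      obtain ⟨y, _, hyx⟩ := hdiv (N * k) (by positivity) ((N : ℤ) • b) (hNB b)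
      refine ⟨y, ?_⟩
      simp only [smulAddHom_apply] at hb ⊢
      rw [← hb]
      push_cast at hyx ⊢
      exact hyx
end

section
/- For every inverse sequence ⋯ → A₃ → A₂ → A₁ of abelian groups satisfying the Mittag-Leffler condition, the first derived inverse limit lim¹ vanishes; concretely, the map ∏_n A_n → ∏_n A_n sending (a_n)_n to (a_n − φ_n(a_{n+1}))_n is surjective, where φ_n : A_{n+1} → A_n are the transition maps. -/
def transMap {A : ℕ → Type*} [∀ n, AddCommGroup (A n)] (φ : ∀ n, A (n + 1) →+ A n) :
    ∀ n k : ℕ, A (n + k) →+ A n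
  | _, 0 => AddMonoidHom.id _
  | n, k + 1 => (transMap φ n k).comp (φ (n + k))

section Aux
variable {A : ℕ → Type*} [∀ n, AddCommGroup (A n)] (φ : ∀ n, A (n + 1) →+ A n)

omit [∀ n, AddCommGroup (A n)] in
lemma aux_cast_apply {i j : ℕ} (h : i = j) (c : ∀ n, A n) :
    _root_.cast (congrArg A h) (c i) = c j := by subst h; rfl

lemma aux_cast_phi {i j : ℕ} (h : i = j) (x : A (i + 1)) :
    _root_.cast (congrArg A h) (φ i x) =
      φ j (_root_.cast (congrArg A (congrArg (· + 1) h)) x) := by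
  subst h; rfl

lemma aux_phi_trans (n k : ℕ) (x : A (n + 1 + k)) :
    φ n (transMap φ (n + 1) k x) =
      transMap φ n (k + 1) (_root_.cast (congrArg A (Nat.succ_add n k)) x) := by
  induction k with
  | zero => rfl
  | succ k ih =>
      show φ n (transMap φ (n+1) k (φ (n+1+k) x)) = _
      rw [ih, aux_cast_phi φ (Nat.succ_add n k)]
      rfl

lemma aux_trans_phi (n k : ℕ) (y : A (n + (k + 1))) :
    transMap φ n (k + 1) y =
      φ n (transMap φ (n + 1) k (_root_.cast (congrArg A (Nat.succ_add n k).symm) y)) := by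
  rw [aux_phi_trans, cast_cast, cast_eq]

lemma aux_range_le (n k j : ℕ) :
    (transMap φ n (k + j)).range ≤ (transMap φ n k).range := by
  induction j with
  | zero => exact le_rfl
  | succ j ih =>
      rintro x ⟨y, rfl⟩
      exact ih ⟨φ (n + (k + j)) y, rfl⟩
end Aux

/-- For an inverse sequence `⋯ → A₃ → A₂ → A₁` of abelian groups satisfying
the Mittag-Leffler condition, `lim¹` vanishes: the map `∏ₙ Aₙ → ∏ₙ Aₙ`,
`(aₙ)ₙ ↦ (aₙ − φₙ(aₙ₊₁))ₙ`, is surjective. -/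
theorem stmt_12 (A : ℕ → Type*) [∀ n, AddCommGroup (A n)] (φ : ∀ n, A (n + 1) →+ A n)
    (hML : ∀ n : ℕ, ∃ m : ℕ, ∀ k : ℕ,
      (transMap φ n (m + k)).range = (transMap φ n m).range) :
    Function.Surjective (fun (a : ∀ n, A n) => fun n => a n - φ n (a (n + 1))) := by
  intro c
  classical
  let mn : ℕ → ℕ := fun n => (hML n).choose
  have hmn : ∀ n k, (transMap φ n (mn n + k)).range = (transMap φ n (mn n)).range :=
    fun n => (hML n).choose_spec
  let B : ∀ n, AddSubgroup (A n) := fun n => (transMap φ n (mn n)).range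
  -- stable range
  have hB : ∀ n j, mn n ≤ j → (transMap φ n j).range = B n := by
    intro n j hj
    have e : mn n + (j - mn n) = j := Nat.add_sub_cancel' hj
    rw [← e]
    exact hmn n (j - mn n)
  -- surjectivity of transition maps between stable images
  have hsurj : ∀ n, ∀ d ∈ B n, ∃ b ∈ B (n + 1), φ n b = d := by
    intro n d hd
    set k := mn n + mn (n + 1) with hk
    have hd' : d ∈ (transMap φ n (k + 1)).range := by
      rw [hB n (k + 1) (by omega)]; exact hd
    obtain ⟨x, hx⟩ := hd'
    refine ⟨transMap φ (n + 1) k (_root_.cast (congrArg A (Nat.succ_add n k).symm) x), ?_, ?_⟩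
    · rw [← hB (n + 1) k (by omega)]
      exact ⟨_, rfl⟩
    · rw [← aux_trans_phi]
      exact hx
  -- monotone choice of truncation lengths
  let M : ℕ → ℕ := fun n => (Finset.range (n + 1)).sup mn
  have hM1 : ∀ n, mn n ≤ M n := fun n => Finset.le_sup (by simp)
  have hM2 : ∀ n, M n ≤ M (n + 1) :=
    fun n => Finset.sup_mono (Finset.range_subset_range.mpr (by omega))
  -- partial telescoping sums
  let S : ∀ n, A n := fun n => ∑ k ∈ Finset.range (M n), transMap φ n k (c (n + k))
  -- the defect lies in the stable image
  have hd : ∀ n, c n - S n + φ n (S (n + 1)) ∈ B n := by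
    intro n
    have key : φ n (S (n + 1)) =
        ∑ k ∈ Finset.range (M (n + 1)), transMap φ n (k + 1) (c (n + (k + 1))) := by
      show φ n (∑ k ∈ Finset.range (M (n + 1)), transMap φ (n + 1) k (c (n + 1 + k))) = _
      rw [map_sum]
      refine Finset.sum_congr rfl fun k _ => ?_
      rw [aux_phi_trans, aux_cast_apply]
      omega
    have key2 : φ n (S (n + 1)) =
        (∑ k ∈ Finset.range (M (n + 1) + 1), transMap φ n k (c (n + k))) - c n := by
      rw [key, Finset.sum_range_succ']
      show _ = _ + transMap φ n 0 (c (n + 0)) - c n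
      simp [transMap]
    have e : c n - S n + φ n (S (n + 1)) =
        ∑ k ∈ Finset.Ico (M n) (M (n + 1) + 1), transMap φ n k (c (n + k)) := by
      rw [Finset.sum_Ico_eq_sub _ (by have := hM2 n; omega), key2]
      show c n - S n + _ = _ - S n
      abel
    rw [e]
    refine AddSubgroup.sum_mem _ fun k hk => ?_
    rw [Finset.mem_Ico] at hk
    have : (transMap φ n k).range ≤ B n := by
      rw [← hB n k (le_trans (hM1 n) hk.1)]
    exact this ⟨_, rfl⟩
  -- recursive correction term inside stable images
  let step : ∀ n, {x : A n // x ∈ B n} → {x : A (n + 1) // x ∈ B (n + 1)} := fun n p =>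
    ⟨(hsurj n (p.1 - (c n - S n + φ n (S (n + 1)))) (sub_mem p.2 (hd n))).choose,
     (hsurj n (p.1 - (c n - S n + φ n (S (n + 1)))) (sub_mem p.2 (hd n))).choose_spec.1⟩
  let bb : ∀ n, {x : A n // x ∈ B n} := fun n => Nat.rec ⟨0, zero_mem _⟩ step n
  have hbb : ∀ n, φ n (bb (n + 1)).1 = (bb n).1 - (c n - S n + φ n (S (n + 1))) :=
    fun n => (hsurj n ((bb n).1 - (c n - S n + φ n (S (n + 1))))
      (sub_mem (bb n).2 (hd n))).choose_spec.2
  refine ⟨fun n => S n + (bb n).1, ?_⟩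
  funext n
  show S n + (bb n).1 - φ n (S (n + 1) + (bb (n + 1)).1) = c n
  rw [map_add, hbb]
  abel
end

section
/- Consider the inverse system of copies of Z indexed by positive integers ordered by divisibility, with transition map from index mn to index n given by multiplication by m. Its inverse limit is 0, and its first derived limit lim¹ is isomorphic to (Ẑ ⊗_Z Q)/Q, where Ẑ = lim_n Z/nZ is the profinite completion of Z and Q embeds diagonally. -/
/-- The profinite completion `Ẑ = lim_n ℤ/nℤ`, realized as the group of compatible systems. -/
def Zhat : AddSubgroup (∀ n : ℕ+, ZMod n) where
  carrier := {f | ∀ m n : ℕ+,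
    ZMod.castHom (show ((n : ℕ+) : ℕ) ∣ ((m * n : ℕ+) : ℕ) by
      rw [PNat.mul_coe]; exact dvd_mul_left _ _) (ZMod n) (f (m * n)) = f n}
  zero_mem' := by intro m n; first | exact map_zero _ | exact RingHom.map_zero _ | simp [map_zero]
  add_mem' := by
    intro f g hf hg m n
    simp only [Pi.add_apply, map_add, hf m n, hg m n]
  neg_mem' := by
    intro f hf m n
    simp only [Pi.neg_apply, map_neg, hf m n]

/-- The diagonal element `1 ∈ Ẑ`. -/
def ZhatOne : Zhat := ⟨fun _ => 1, fun _ _ => map_one _⟩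

/-- The embedding `ℚ → Ẑ ⊗ ℚ`, `q ↦ 1 ⊗ q`. -/
noncomputable def Qdiag : ℚ →+ TensorProduct ℤ Zhat ℚ :=
  ((TensorProduct.mk ℤ Zhat ℚ) ZhatOne).toAddMonoidHom

/-- The `lim¹`-complex differential `∏ ℤ → ∏ ℤ` for the cofinal sequence of factorials in the
divisibility order (the transition map from `(n+1)!` to `n!` is multiplication by `n + 1`). -/
def dFact : (ℕ → ℤ) →+ (ℕ → ℤ) where
  toFun a := fun n => a n - ((n : ℤ) + 1) * a (n + 1)
  map_zero' := by funext n; simp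
  map_add' a b := by funext n; simp; ring


set_option maxHeartbeats 1000000
set_option synthInstance.maxHeartbeats 400000

open Finset in
/-- Partial sums `S a n = ∑_{k<n} k! a k`. -/
def Sf (a : ℕ → ℤ) (n : ℕ) : ℤ := ∑ k ∈ range n, (k.factorial : ℤ) * a k

lemma Sf_succ (a : ℕ → ℤ) (n : ℕ) :
    Sf a (n+1) = Sf a n + (n.factorial : ℤ) * a n := Finset.sum_range_succ _ n

lemma dvd_Sf_sub (a : ℕ → ℤ) (d : ℕ) {n n' : ℕ} (h : n ≤ n')
    (hd : ∀ k, n ≤ k → (d : ℤ) ∣ (k.factorial : ℤ)) :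
    (d : ℤ) ∣ Sf a n' - Sf a n := by
  induction n' with
  | zero => interval_cases n; simp
  | succ m ih =>
    rcases Nat.lt_or_ge n (m+1) with hlt | hge
    · have hnm : n ≤ m := by omega
      have := ih hnm
      have h2 : (d:ℤ) ∣ (m.factorial : ℤ) * a m := Dvd.dvd.mul_right (hd m hnm) _
      have e : Sf a (m+1) - Sf a n = (Sf a m - Sf a n) + (m.factorial : ℤ) * a m := by
        rw [Sf_succ]; ring
      rw [e]; exact dvd_add this h2
    · have : n = m + 1 := by omega
      subst this; simp

lemma dvd_Sf_sub' (a : ℕ → ℤ) (d : ℕ+) {n n' : ℕ} (h : n ≤ n') (hdn : (d:ℕ) ≤ n) :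
    ((d:ℕ) : ℤ) ∣ Sf a n' - Sf a n :=
  dvd_Sf_sub a d h (fun k hk => Int.natCast_dvd_natCast.mpr
    (Nat.dvd_factorial d.pos (le_trans hdn hk)))

/-- The integer `c` as an element of `Zhat`. -/
def ZhatInt (c : ℤ) : Zhat := ⟨fun n => (c : ZMod n), by intro m n; exact map_intCast _ _⟩

/-- The map `∏ℤ → Zhat` sending `a` to the limit of the partial sums `S a n` mod `n`. -/
def wS : (ℕ → ℤ) →+ Zhat where
  toFun a := ⟨fun n => ((Sf a n : ℤ) : ZMod n), by
    intro m n
    rw [map_intCast]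
    have h1 : (n:ℕ) ≤ ((m*n : ℕ+) : ℕ) := by
      rw [PNat.mul_coe]; exact Nat.le_mul_of_pos_left _ m.pos
    have := dvd_Sf_sub' a n h1 le_rfl
    rw [ZMod.intCast_eq_intCast_iff]
    exact Int.ModEq.symm (Int.modEq_iff_dvd.mpr this)⟩
  map_zero' := by
    ext n
    simp [Sf]
  map_add' a b := by
    ext n
    have : Sf (a + b) n = Sf a n + Sf b n := by
      simp [Sf, Finset.sum_add_distrib, mul_add]
    simp only [AddSubgroup.coe_add, AddMemClass.mk_add_mk, this]
    push_cast
    rfl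

lemma wS_apply (a : ℕ → ℤ) (n : ℕ+) : (wS a : ∀ n : ℕ+, ZMod n) n = ((Sf a n : ℤ) : ZMod n) := rfl

lemma ZhatInt_apply (c : ℤ) (n : ℕ+) : (ZhatInt c : ∀ n : ℕ+, ZMod n) n = (c : ZMod n) := rfl

lemma ZhatInt_eq_smul (c : ℤ) : ZhatInt c = c • ZhatOne := by
  ext n
  have : ((c • ZhatOne : Zhat) : ∀ n : ℕ+, ZMod n) n = c • (1 : ZMod n) := rfl
  rw [ZhatInt_apply, this, zsmul_eq_mul, mul_one]

lemma Sf_dFact (b : ℕ → ℤ) (n : ℕ) :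
    Sf (dFact b) n = b 0 - (n.factorial : ℤ) * b n := by
  induction n with
  | zero => simp [Sf]
  | succ m ih =>
    rw [Sf_succ, ih]
    have : dFact b m = b m - ((m : ℤ) + 1) * b (m + 1) := rfl
    rw [this, Nat.factorial_succ]
    push_cast
    ring

lemma wS_dFact (b : ℕ → ℤ) : wS (dFact b) = ZhatInt (b 0) := by
  ext n
  rw [wS_apply, ZhatInt_apply, Sf_dFact]
  have hdvd : ((n : ℕ) : ℤ) ∣ ((n : ℕ).factorial : ℤ) * b n :=
    Dvd.dvd.mul_right (Int.natCast_dvd_natCast.mpr (Nat.dvd_factorial n.pos le_rfl)) _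
  rw [ZMod.intCast_eq_intCast_iff]
  refine Int.ModEq.symm (Int.modEq_iff_dvd.mpr ?_)
  have : b 0 - ((n:ℕ).factorial : ℤ) * b n - b 0 = -(((n:ℕ).factorial : ℤ) * b n) := by ring
  rw [this]
  exact dvd_neg.mpr hdvd

/-- `n!` as a positive natural. -/
def pfac (n : ℕ) : ℕ+ := ⟨n.factorial, n.factorial_pos⟩

lemma pfac_succ (n : ℕ) : pfac (n + 1) = n.succPNat * pfac n := by
  apply Subtype.ext
  show (n+1).factorial = ((n.succPNat * pfac n : ℕ+) : ℕ)
  rw [PNat.mul_coe]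
  simp [pfac, Nat.factorial_succ, Nat.succPNat]

lemma fac_dvd_of_wS_eq_int {a : ℕ → ℤ} {c : ℤ} (h : wS a = ZhatInt c) (n : ℕ) :
    ((n.factorial : ℕ) : ℤ) ∣ c - Sf a n := by
  have h1 : ((Sf a (n.factorial) : ℤ) : ZMod (pfac n)) = (c : ZMod (pfac n)) := by
    have := congrArg (fun z : Zhat => (z : ∀ n : ℕ+, ZMod n) (pfac n)) h
    exact this
  have h2 : ((n.factorial : ℕ) : ℤ) ∣ c - Sf a n.factorial := by
    have := (ZMod.intCast_eq_intCast_iff _ _ _).mp h1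
    exact Int.ModEq.dvd this
  have h3 : ((n.factorial : ℕ) : ℤ) ∣ Sf a n.factorial - Sf a n := by
    refine dvd_Sf_sub a n.factorial n.self_le_factorial (fun k hk => ?_)
    exact Int.natCast_dvd_natCast.mpr (Nat.factorial_dvd_factorial hk)
  have e : c - Sf a n = (c - Sf a n.factorial) + (Sf a n.factorial - Sf a n) := by ring
  rw [e]; exact dvd_add h2 h3

lemma mem_range_of_wS_eq_int {a : ℕ → ℤ} {c : ℤ} (h : wS a = ZhatInt c) :
    a ∈ dFact.range := by
  set b : ℕ → ℤ := fun n => (c - Sf a n) / (n.factorial : ℤ) with hb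
  have hbmul : ∀ n : ℕ, (n.factorial : ℤ) * b n = c - Sf a n := fun n =>
    Int.mul_ediv_cancel' (fac_dvd_of_wS_eq_int h n)
  refine ⟨b, funext fun n => ?_⟩
  have hne : (n.factorial : ℤ) ≠ 0 := Int.natCast_ne_zero.mpr n.factorial_pos.ne'
  apply mul_left_cancel₀ hne
  have : dFact b n = b n - ((n : ℤ) + 1) * b (n + 1) := rfl
  rw [this]
  have e1 : (n.factorial : ℤ) * (b n - ((n : ℤ) + 1) * b (n + 1))
      = (n.factorial : ℤ) * b n - ((n + 1).factorial : ℤ) * b (n + 1) := by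
    rw [Nat.factorial_succ]; push_cast; ring
  rw [e1, hbmul, hbmul, Sf_succ]
  ring

lemma zhat_compat (z : Zhat) (m n : ℕ+) :
    ZMod.castHom (show ((n : ℕ+) : ℕ) ∣ ((m * n : ℕ+) : ℕ) by
      rw [PNat.mul_coe]; exact dvd_mul_left _ _) (ZMod n)
      ((z : ∀ k : ℕ+, ZMod k) (m * n)) = (z : ∀ k : ℕ+, ZMod k) n := z.2 m n

lemma zhat_cast_eq {z : Zhat} {a b : ℕ+} (hab : (a : ℕ) ∣ (b : ℕ)) :
    ZMod.castHom hab (ZMod a) ((z : ∀ k : ℕ+, ZMod k) b) = (z : ∀ k : ℕ+, ZMod k) a := by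
  obtain ⟨d, hd⟩ := hab
  have hdpos : 0 < d := by
    rcases Nat.eq_zero_or_pos d with h | h
    · exfalso; rw [h, mul_zero] at hd; exact (b.pos.ne' hd)
    · exact h
  have hb : b = (d.toPNat hdpos) * a := by
    apply Subtype.ext
    show (b : ℕ) = ((d.toPNat hdpos * a : ℕ+) : ℕ)
    rw [PNat.mul_coe]
    simpa [Nat.toPNat, mul_comm] using hd
  subst hb
  exact z.2 _ a

lemma wS_surjective : Function.Surjective wS := by
  intro z
  set T : ℕ → ℤ := fun n => (((z : ∀ k : ℕ+, ZMod k) (pfac n)).val : ℤ) with hT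
  have hTcast : ∀ n : ℕ, ((T n : ℤ) : ZMod (pfac n)) = (z : ∀ k : ℕ+, ZMod k) (pfac n) := by
    intro n
    have : NeZero ((pfac n : ℕ+) : ℕ) := ⟨(pfac n).pos.ne'⟩
    push_cast [hT]
    exact ZMod.natCast_rightInverse _
  have hdvd : ∀ n : ℕ, ((n.factorial : ℕ) : ℤ) ∣ T (n + 1) - T n := by
    intro n
    have hcast : ZMod.castHom (show ((pfac n : ℕ+) : ℕ) ∣ ((pfac (n+1) : ℕ+) : ℕ) from
        Nat.factorial_dvd_factorial (Nat.le_succ n)) (ZMod (pfac n))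
          ((z : ∀ k : ℕ+, ZMod k) (pfac (n+1))) = (z : ∀ k : ℕ+, ZMod k) (pfac n) :=
      zhat_cast_eq _
    have : ((T (n+1) : ℤ) : ZMod (pfac n)) = ((T n : ℤ) : ZMod (pfac n)) := by
      calc ((T (n+1) : ℤ) : ZMod (pfac n))
          = ZMod.castHom (show ((pfac n : ℕ+) : ℕ) ∣ ((pfac (n+1) : ℕ+) : ℕ) from
              Nat.factorial_dvd_factorial (Nat.le_succ n)) (ZMod (pfac n))
            ((T (n+1) : ℤ) : ZMod (pfac (n+1))) := (map_intCast _ _).symm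
        _ = (z : ∀ k : ℕ+, ZMod k) (pfac n) := by rw [hTcast (n+1)]; exact hcast
        _ = ((T n : ℤ) : ZMod (pfac n)) := (hTcast n).symm
    exact Int.ModEq.dvd ((ZMod.intCast_eq_intCast_iff _ _ _).mp this).symm
  set a : ℕ → ℤ := fun n => (T (n + 1) - T n) / (n.factorial : ℤ) with ha
  have hamul : ∀ n : ℕ, (n.factorial : ℤ) * a n = T (n + 1) - T n := fun n =>
    Int.mul_ediv_cancel' (hdvd n)
  have hT0 : T 0 = 0 := by
    haveI : Subsingleton (ZMod ((pfac 0 : ℕ+) : ℕ)) := by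
      show Subsingleton (ZMod 1); infer_instance
    have : (z : ∀ k : ℕ+, ZMod k) (pfac 0) = 0 := Subsingleton.elim _ _
    simp [hT, this]
  have hSf : ∀ n : ℕ, Sf a n = T n := by
    intro n
    induction n with
    | zero => simp [Sf, hT0]
    | succ m ih => rw [Sf_succ, ih, hamul]; ring
  refine ⟨a, ?_⟩
  ext m
  rw [wS_apply, hSf]
  have hmd : ((m : ℕ+) : ℕ) ∣ ((pfac (m : ℕ) : ℕ+) : ℕ) := Nat.dvd_factorial m.pos le_rfl
  have := zhat_cast_eq (z := z) hmd
  rw [← hTcast (m : ℕ), map_intCast] at this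
  exact this

lemma zhat_val_natCast (z : Zhat) (n : ℕ+) [NeZero ((n : ℕ+) : ℕ)] :
    ((((z : ∀ k : ℕ+, ZMod k) n).val : ℤ) : ZMod n) = (z : ∀ k : ℕ+, ZMod k) n := by
  push_cast
  exact ZMod.natCast_rightInverse _

lemma zhat_torsionfree {n : ℤ} (hn : n ≠ 0) {z : Zhat} (h : n • z = 0) : z = 0 := by
  have hpos : 0 < n.natAbs := Int.natAbs_pos.mpr hn
  set N : ℕ+ := n.natAbs.toPNat hpos with hN
  ext m
  show (z : ∀ k : ℕ+, ZMod k) m = 0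
  haveI : NeZero ((N * m : ℕ+) : ℕ) := ⟨(N * m).pos.ne'⟩
  set k : ℤ := (((z : ∀ k : ℕ+, ZMod k) (N * m)).val : ℤ) with hk
  have hkz : (k : ZMod (N * m)) = (z : ∀ k : ℕ+, ZMod k) (N * m) := zhat_val_natCast z (N * m)
  have h0 : ((n * k : ℤ) : ZMod (N * m)) = 0 := by
    have := congrArg (fun w : Zhat => (w : ∀ k : ℕ+, ZMod k) (N * m)) h
    have h2 : n • (z : ∀ k : ℕ+, ZMod k) (N * m) = 0 := by
      simpa using this
    rw [zsmul_eq_mul] at h2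
    push_cast
    rw [hkz]
    exact h2
  have hdvd : (((N * m : ℕ+) : ℕ) : ℤ) ∣ n * k := (ZMod.intCast_zmod_eq_zero_iff_dvd _ _).mp h0
  have hNm : ((N * m : ℕ+) : ℕ) = n.natAbs * (m : ℕ) := by
    rw [PNat.mul_coe]; rfl
  rw [hNm] at hdvd
  have hmk : ((m : ℕ) : ℤ) ∣ k := by
    have h1 : n.natAbs * (m : ℕ) ∣ (n * k).natAbs := by
      have := Int.natAbs_dvd_natAbs.mpr hdvd
      rwa [Int.natAbs_natCast] at this
    rw [Int.natAbs_mul] at h1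
    have h2 : (m : ℕ) ∣ k.natAbs :=
      (mul_dvd_mul_iff_left hpos.ne').mp h1
    exact Int.dvd_natAbs.mp (Int.natCast_dvd_natCast.mpr h2)
  have := zhat_cast_eq (z := z) (a := m) (b := N * m)
    (show ((m : ℕ+) : ℕ) ∣ ((N * m : ℕ+) : ℕ) by rw [PNat.mul_coe]; exact dvd_mul_left _ _)
  rw [← this, ← (show ((k : ZMod ((N * m : ℕ+) : ℕ))) = (z : ∀ k : ℕ+, ZMod k) (N * m) from hkz),
    map_intCast, ZMod.intCast_zmod_eq_zero_iff_dvd]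
  exact hmk

lemma zhat_div (z : Zhat) (N : ℕ+) :
    ∃ (y : Zhat) (c : ℤ), z = (((N : ℕ+) : ℕ) : ℤ) • y + ZhatInt c := by
  haveI : NeZero ((N : ℕ+) : ℕ) := ⟨N.pos.ne'⟩
  set c : ℤ := (((z : ∀ k : ℕ+, ZMod k) N).val : ℤ) with hc
  set u : Zhat := z - ZhatInt c with huu
  have hu : ∀ m : ℕ+, (u : ∀ k : ℕ+, ZMod k) m
      = (z : ∀ k : ℕ+, ZMod k) m - (c : ZMod m) := fun m => rfl
  have huN : (u : ∀ k : ℕ+, ZMod k) N = 0 := by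
    rw [hu, zhat_val_natCast z N, sub_self]
  set k : ℕ+ → ℕ := fun m => ((u : ∀ k : ℕ+, ZMod k) (m * N)).val with hk
  have hkc : ∀ m : ℕ+, ((k m : ℕ) : ZMod ((m * N : ℕ+) : ℕ)) = (u : ∀ k : ℕ+, ZMod k) (m * N) := by
    intro m
    haveI : NeZero ((m * N : ℕ+) : ℕ) := ⟨(m * N).pos.ne'⟩
    exact ZMod.natCast_rightInverse _
  have hNk : ∀ m : ℕ+, ((N : ℕ+) : ℕ) ∣ k m := by
    intro m
    have hd : ((N : ℕ+) : ℕ) ∣ ((m * N : ℕ+) : ℕ) := by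
      rw [PNat.mul_coe]; exact dvd_mul_left _ _
    have := zhat_cast_eq (z := u) hd
    rw [← hkc m, map_natCast, huN] at this
    exact (ZMod.natCast_eq_zero_iff _ _).mp this
  set j : ℕ+ → ℕ := fun m => k m / ((N : ℕ+) : ℕ) with hj
  have hkj : ∀ m : ℕ+, (k m : ℤ) = (((N : ℕ+) : ℕ) : ℤ) * (j m : ℤ) := by
    intro m
    rw [hj]
    have h2 : ((N : ℕ+) : ℕ) * (k m / ((N : ℕ+) : ℕ)) = k m := Nat.mul_div_cancel' (hNk m)
    exact_mod_cast (congrArg (Nat.cast : ℕ → ℤ) h2).symm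
  have ycompat : ∀ m' n' : ℕ+,
      ZMod.castHom (show ((n' : ℕ+) : ℕ) ∣ ((m' * n' : ℕ+) : ℕ) by
        rw [PNat.mul_coe]; exact dvd_mul_left _ _) (ZMod n')
        ((j (m' * n') : ℕ) : ZMod ((m' * n' : ℕ+) : ℕ)) = ((j n' : ℕ) : ZMod ((n' : ℕ+) : ℕ)) := by
    intro m' n'
    rw [map_natCast]
    have hd : ((n' * N : ℕ+) : ℕ) ∣ (((m' * n') * N : ℕ+) : ℕ) := by
      rw [show (m' * n') * N = m' * (n' * N) from mul_assoc m' n' N, PNat.mul_coe]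
      exact dvd_mul_left _ _
    have hcast := zhat_cast_eq (z := u) hd
    rw [← hkc ((m' * n')), ← hkc n', map_natCast] at hcast
    have hdiff : (((n' * N : ℕ+) : ℕ) : ℤ) ∣ (k (m' * n') : ℤ) - (k n' : ℤ) := by
      have hmod := (ZMod.natCast_eq_natCast_iff _ _ _).mp hcast
      have hmod2 : (k (m' * n') : ℤ) ≡ (k n' : ℤ) [ZMOD (((n' * N : ℕ+) : ℕ) : ℤ)] :=
        Int.natCast_modEq_iff.mpr hmod
      exact Int.ModEq.dvd hmod2.symm
    have hjd : (((n' : ℕ+) : ℕ) : ℤ) ∣ (j (m' * n') : ℤ) - (j n' : ℤ) := by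
      rw [hkj, hkj] at hdiff
      have e : (((N:ℕ+):ℕ):ℤ) * (j (m' * n') : ℤ) - (((N:ℕ+):ℕ):ℤ) * (j n' : ℤ)
          = (((N:ℕ+):ℕ):ℤ) * ((j (m' * n') : ℤ) - (j n' : ℤ)) := by ring
      rw [e] at hdiff
      have e2 : (((n' * N : ℕ+) : ℕ) : ℤ) = (((N:ℕ+):ℕ):ℤ) * (((n':ℕ+):ℕ):ℤ) := by
        rw [PNat.mul_coe]; push_cast; ring
      rw [e2] at hdiff
      have hN0 : (((N:ℕ+):ℕ):ℤ) ≠ 0 := Int.natCast_ne_zero.mpr N.pos.ne'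
      exact (mul_dvd_mul_iff_left hN0).mp hdiff
    have : ((j (m' * n') : ℤ) : ZMod n') = ((j n' : ℤ) : ZMod n') := by
      rw [ZMod.intCast_eq_intCast_iff]
      exact Int.ModEq.symm (Int.modEq_iff_dvd.mpr hjd)
    push_cast at this ⊢
    exact this
  set y : Zhat := ⟨fun m => ((j m : ℕ) : ZMod m), ycompat⟩ with hy
  refine ⟨y, c, ?_⟩
  ext m
  show (z : ∀ k : ℕ+, ZMod k) m
      = ((((((N : ℕ+) : ℕ) : ℤ) • y + ZhatInt c : Zhat)) : ∀ k : ℕ+, ZMod k) m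
  have hrhs : ((((((N : ℕ+) : ℕ) : ℤ) • y + ZhatInt c : Zhat)) : ∀ k : ℕ+, ZMod k) m
      = (((N : ℕ+) : ℕ) : ℤ) • ((j m : ℕ) : ZMod m) + (c : ZMod m) := rfl
  rw [hrhs, zsmul_eq_mul]
  have hkm : ((k m : ℕ) : ZMod ((m : ℕ+) : ℕ)) = (z : ∀ k : ℕ+, ZMod k) m - (c : ZMod m) := by
    have hd : ((m : ℕ+) : ℕ) ∣ ((m * N : ℕ+) : ℕ) := by
      rw [PNat.mul_coe]; exact dvd_mul_right _ _
    have := zhat_cast_eq (z := u) hd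
    rw [← hkc m, map_natCast] at this
    rw [this, hu]
  have : ((((N:ℕ+):ℕ):ℤ) : ZMod m) * ((j m : ℕ) : ZMod m) = ((k m : ℕ) : ZMod m) := by
    have := hkj m
    push_cast
    rw [show ((k m : ℕ) : ZMod m) = (((k m : ℕ) : ℤ) : ZMod m) by push_cast; rfl, this]
    push_cast
    ring
  rw [this, hkm]
  ring

set_option maxHeartbeats 1000000
set_option synthInstance.maxHeartbeats 200000

open TensorProduct in
/-- The map `Zhat → Zhat ⊗ ℚ`, `z ↦ z ⊗ 1`. -/
noncomputable def toT : Zhat →+ TensorProduct ℤ Zhat ℚ where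
  toFun z := z ⊗ₜ (1 : ℚ)
  map_zero' := TensorProduct.zero_tmul _ _
  map_add' x y := TensorProduct.add_tmul x y 1

lemma tmul_one_eq_zero {u : Zhat} (h : (u ⊗ₜ (1:ℚ) : TensorProduct ℤ Zhat ℚ) = 0) : u = 0 := by
  haveI : IsLocalizedModule (nonZeroDivisors ℤ) (TensorProduct.mk ℤ ℚ Zhat 1) :=
    (isLocalizedModule_iff_isBaseChange (nonZeroDivisors ℤ) ℚ _).mpr
      (TensorProduct.isBaseChange ℤ Zhat ℚ)
  have h2 : ((1:ℚ) ⊗ₜ u : TensorProduct ℤ ℚ Zhat) = 0 := by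
    have h3 := congrArg (TensorProduct.comm ℤ Zhat ℚ) h
    simpa using h3
  obtain ⟨s, hs⟩ := (IsLocalizedModule.eq_zero_iff (nonZeroDivisors ℤ)
    (TensorProduct.mk ℤ ℚ Zhat 1)).mp (show (TensorProduct.mk ℤ ℚ Zhat 1) u = 0 from h2)
  have hs0 : (s : ℤ) ≠ 0 := nonZeroDivisors.coe_ne_zero s
  exact zhat_torsionfree hs0 hs

lemma Qdiag_apply (q : ℚ) : Qdiag q = (ZhatOne ⊗ₜ q : TensorProduct ℤ Zhat ℚ) := rfl

lemma zhatInt_tmul (c : ℤ) :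
    ((ZhatInt c) ⊗ₜ (1:ℚ) : TensorProduct ℤ Zhat ℚ) = ZhatOne ⊗ₜ (c : ℚ) := by
  rw [ZhatInt_eq_smul]
  have h1 : ((c • ZhatOne) ⊗ₜ (1:ℚ) : TensorProduct ℤ Zhat ℚ) = ZhatOne ⊗ₜ (c • (1:ℚ)) :=
    TensorProduct.smul_tmul c ZhatOne 1
  have h2 : c • (1:ℚ) = (c : ℚ) := by simp
  rw [h1, h2]

/-- The composite map `∏ℤ → Zhat → Zhat⊗ℚ → (Zhat⊗ℚ)/ℚ`. -/
noncomputable def Phi : (ℕ → ℤ) →+ (TensorProduct ℤ Zhat ℚ ⧸ Qdiag.range) :=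
  (QuotientAddGroup.mk' Qdiag.range).comp (toT.comp wS)

lemma den_mul_self (q : ℚ) : ((q.den : ℚ)) * q = (q.num : ℚ) := by
  have hd : (q.den : ℚ) ≠ 0 := by exact_mod_cast q.den_nz
  calc ((q.den : ℚ)) * q = (q.den : ℚ) * ((q.num : ℚ) / (q.den : ℚ)) := by
        rw [Rat.num_div_den]
    _ = (q.num : ℚ) := by field_simp

lemma ker_Phi : Phi.ker = dFact.range := by
  ext a
  constructor
  · intro ha
    rw [AddMonoidHom.mem_ker] at ha
    have h0 : (QuotientAddGroup.mk' Qdiag.range) ((wS a) ⊗ₜ (1:ℚ)) = 0 := ha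
    rw [QuotientAddGroup.mk'_apply, QuotientAddGroup.eq_zero_iff] at h0
    obtain ⟨q, hq⟩ := h0
    -- hq : Qdiag q = wS a ⊗ₜ 1, i.e. ZhatOne ⊗ₜ q = wS a ⊗ₜ 1
    set N : ℕ+ := ⟨q.den, q.pos⟩ with hN
    set p : ℤ := q.num with hp
    have hq' : ((wS a) ⊗ₜ (1:ℚ) : TensorProduct ℤ Zhat ℚ) = ZhatOne ⊗ₜ q := by
      rw [← hq]; rfl
    have e3 : (((N : ℕ+) : ℕ) : ℤ) • q = (p : ℚ) := by
      rw [zsmul_eq_mul]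
      push_cast
      exact den_mul_self q
    have key : ((((N : ℕ+) : ℕ) : ℤ) • wS a - ZhatInt p) ⊗ₜ (1:ℚ)
        = (0 : TensorProduct ℤ Zhat ℚ) := by
      calc ((((N : ℕ+) : ℕ) : ℤ) • wS a - ZhatInt p) ⊗ₜ (1:ℚ)
          = ((((N : ℕ+) : ℕ) : ℤ) • wS a) ⊗ₜ (1:ℚ)
            - (ZhatInt p) ⊗ₜ (1:ℚ) := TensorProduct.sub_tmul _ _ _
        _ = (((N : ℕ+) : ℕ) : ℤ) • ((wS a) ⊗ₜ (1:ℚ) : TensorProduct ℤ Zhat ℚ)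
            - ZhatOne ⊗ₜ (p : ℚ) := by rw [TensorProduct.smul_tmul', zhatInt_tmul]
        _ = (((N : ℕ+) : ℕ) : ℤ) • ((ZhatOne ⊗ₜ q) : TensorProduct ℤ Zhat ℚ)
            - ZhatOne ⊗ₜ (p : ℚ) := by rw [hq']
        _ = ZhatOne ⊗ₜ ((((N : ℕ+) : ℕ) : ℤ) • q) - ZhatOne ⊗ₜ (p : ℚ) := by
            rw [TensorProduct.tmul_smul]
        _ = 0 := by rw [e3, sub_self]
    have hz : (((N : ℕ+) : ℕ) : ℤ) • wS a = ZhatInt p :=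
      sub_eq_zero.mp (tmul_one_eq_zero key)
    -- evaluate at N to see N ∣ p
    have hNp : (p : ZMod ((N : ℕ+) : ℕ)) = 0 := by
      have := congrArg (fun w : Zhat => (w : ∀ k : ℕ+, ZMod k) N) hz
      have hL : ((((N : ℕ+) : ℕ) : ℤ) • wS a : Zhat).val N
          = ((((N : ℕ+) : ℕ) : ℤ) : ZMod N) * (wS a : Zhat).val N := by
        show (((N : ℕ+) : ℕ) : ℤ) • (wS a : Zhat).val N = _
        rw [zsmul_eq_mul]
      have hcastN : ((((N : ℕ+) : ℕ) : ℤ) : ZMod ((N : ℕ+) : ℕ)) = 0 := by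
        push_cast
        exact ZMod.natCast_self _
      have : ((((N : ℕ+) : ℕ) : ℤ) : ZMod N) * (wS a : Zhat).val N = (p : ZMod N) := by
        rw [← hL]; exact this
      rw [hcastN, zero_mul] at this
      exact this.symm
    have hdvd : (((N : ℕ+) : ℕ) : ℤ) ∣ p := (ZMod.intCast_zmod_eq_zero_iff_dvd _ _).mp hNp
    obtain ⟨c, hc⟩ := hdvd
    have hzc : (((N : ℕ+) : ℕ) : ℤ) • (wS a - ZhatInt c) = 0 := by
      have e : ZhatInt p = (((N : ℕ+) : ℕ) : ℤ) • ZhatInt c := by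
        ext m
        show (p : ZMod m) = (((N : ℕ+) : ℕ) : ℤ) • (c : ZMod m)
        rw [zsmul_eq_mul, hc]
        push_cast
        ring
      rw [smul_sub, hz, e]
      abel
    have hN0 : (((N : ℕ+) : ℕ) : ℤ) ≠ 0 := Int.natCast_ne_zero.mpr N.pos.ne'
    exact mem_range_of_wS_eq_int (sub_eq_zero.mp (zhat_torsionfree hN0 hzc))
  · rintro ⟨b, rfl⟩
    show (QuotientAddGroup.mk' Qdiag.range) ((wS (dFact b)) ⊗ₜ (1:ℚ)) = 0
    rw [wS_dFact, zhatInt_tmul, QuotientAddGroup.mk'_apply, QuotientAddGroup.eq_zero_iff]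
    exact ⟨(b 0 : ℚ), rfl⟩

lemma Phi_surjective : Function.Surjective Phi := by
  intro x
  obtain ⟨t, rfl⟩ := QuotientAddGroup.mk'_surjective Qdiag.range x
  suffices h : ∃ z : Zhat, t - z ⊗ₜ (1:ℚ) ∈ Qdiag.range by
    obtain ⟨z, hz⟩ := h
    obtain ⟨a, rfl⟩ := wS_surjective z
    refine ⟨a, ?_⟩
    show QuotientAddGroup.mk' Qdiag.range ((wS a) ⊗ₜ (1:ℚ)) = QuotientAddGroup.mk' Qdiag.range t
    rw [QuotientAddGroup.mk'_apply, QuotientAddGroup.mk'_apply, QuotientAddGroup.eq_iff_sub_mem]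
    rw [show (wS a) ⊗ₜ (1:ℚ) - t = -(t - (wS a) ⊗ₜ (1:ℚ)) from (neg_sub _ _).symm]
    exact neg_mem hz
  induction t with
  | zero => exact ⟨0, by rw [TensorProduct.zero_tmul, sub_zero]; exact zero_mem _⟩
  | tmul z q =>
    set N : ℕ+ := ⟨q.den, q.pos⟩ with hN
    set p : ℤ := q.num with hp
    obtain ⟨y, c, hyc⟩ := zhat_div (p • z) N
    refine ⟨y, ?_⟩
    have hd : ((q.den : ℚ)) ≠ 0 := by exact_mod_cast q.den_nz
    have hq : q = (p : ℚ) * ((q.den : ℚ))⁻¹ := by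
      rw [hp]
      field_simp
      exact Rat.mul_den_eq_num q
    have step1 : (z ⊗ₜ q : TensorProduct ℤ Zhat ℚ)
        = (p • z) ⊗ₜ ((q.den : ℚ))⁻¹ := by
      conv_lhs => rw [hq]
      have e1 : (p : ℚ) * ((q.den : ℚ))⁻¹ = p • ((q.den : ℚ))⁻¹ := by
        rw [zsmul_eq_mul]
      rw [e1, TensorProduct.tmul_smul, TensorProduct.smul_tmul']
    have step2 : ((p • z) ⊗ₜ ((q.den : ℚ))⁻¹ : TensorProduct ℤ Zhat ℚ)
        = y ⊗ₜ (1:ℚ) + ZhatOne ⊗ₜ ((c:ℚ) * ((q.den : ℚ))⁻¹) := by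
      rw [hyc, TensorProduct.add_tmul]
      congr 1
      · have e2 : (((((N : ℕ+) : ℕ) : ℤ) • y) ⊗ₜ ((q.den : ℚ))⁻¹ : TensorProduct ℤ Zhat ℚ)
            = y ⊗ₜ ((((N : ℕ+) : ℕ) : ℤ) • ((q.den : ℚ))⁻¹) :=
          TensorProduct.smul_tmul _ _ _
        have e3 : (((N : ℕ+) : ℕ) : ℤ) • ((q.den : ℚ))⁻¹ = (1:ℚ) := by
          rw [zsmul_eq_mul]
          have : ((((N : ℕ+) : ℕ) : ℤ) : ℚ) = (q.den : ℚ) := by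
            rw [hN]; push_cast; rfl
          rw [this]
          field_simp
        rw [e2, e3]
      · rw [ZhatInt_eq_smul]
        have e4 : ((c • ZhatOne) ⊗ₜ ((q.den : ℚ))⁻¹ : TensorProduct ℤ Zhat ℚ)
            = ZhatOne ⊗ₜ (c • ((q.den : ℚ))⁻¹) := TensorProduct.smul_tmul _ _ _
        rw [e4, zsmul_eq_mul]
    rw [step1, step2]
    have : (y ⊗ₜ (1:ℚ) + ZhatOne ⊗ₜ ((c:ℚ) * ((q.den : ℚ))⁻¹) : TensorProduct ℤ Zhat ℚ)
          - y ⊗ₜ (1:ℚ)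
        = (ZhatOne ⊗ₜ ((c:ℚ) * ((q.den : ℚ))⁻¹) : TensorProduct ℤ Zhat ℚ) := by abel
    rw [this]
    exact ⟨(c:ℚ) * ((q.den : ℚ))⁻¹, rfl⟩
  | add t1 t2 ih1 ih2 =>
    obtain ⟨z1, hz1⟩ := ih1
    obtain ⟨z2, hz2⟩ := ih2
    refine ⟨z1 + z2, ?_⟩
    have : t1 + t2 - (z1 + z2) ⊗ₜ (1:ℚ)
        = (t1 - z1 ⊗ₜ (1:ℚ)) + (t2 - z2 ⊗ₜ (1:ℚ)) := by
      rw [TensorProduct.add_tmul]; abel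
    rw [this]
    exact add_mem hz1 hz2

theorem stmt_13' :
    (∀ f : ℕ+ → ℤ, (∀ m n : ℕ+, ((m : ℕ) : ℤ) * f (m * n) = f n) → f = 0) ∧
    (∀ n : ℕ+, ∃ m : ℕ, ((n : ℕ+) : ℕ) ∣ m.factorial) ∧
    Nonempty (((ℕ → ℤ) ⧸ dFact.range) ≃+
      (TensorProduct ℤ Zhat ℚ ⧸ Qdiag.range)) := by
  refine ⟨?_, fun n => ⟨(n : ℕ), Nat.dvd_factorial n.pos le_rfl⟩, ?_⟩
  · intro f hf
    funext n
    show f n = 0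
    have hdvd : ∀ m : ℕ+, ((m : ℕ) : ℤ) ∣ f n := fun m => ⟨f (m * n), (hf m n).symm⟩
    by_contra hne
    set m : ℕ+ := ⟨(f n).natAbs + 1, Nat.succ_pos _⟩ with hm
    have h1 : ((m : ℕ) : ℤ) ∣ |f n| := (dvd_abs _ _).mpr (hdvd m)
    have h2 : ((m : ℕ) : ℤ) ≤ |f n| := Int.le_of_dvd (abs_pos.mpr hne) h1
    have h3 : ((m : ℕ) : ℤ) = ((f n).natAbs : ℤ) + 1 := by
      show ((((f n).natAbs + 1 : ℕ) : ℤ)) = ((f n).natAbs : ℤ) + 1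
      push_cast
      ring
    rw [h3, Int.abs_eq_natAbs] at h2
    omega
  · exact ⟨(QuotientAddGroup.quotientAddEquivOfEq ker_Phi.symm).trans
      (QuotientAddGroup.quotientKerEquivOfSurjective Phi Phi_surjective)⟩

/-- Consider the inverse system of copies of `ℤ` indexed by positive integers
ordered by divisibility, with transition map from index `m*n` to index `n` given by
multiplication by `m`. Its inverse limit is `0`, and its first derived limit `lim¹` — computed
via the cofinal sequence of factorials (`n ∣ n!` for `n ≥ 1`), as the cokernel of the map
`∏ℤ → ∏ℤ`, `(aₙ) ↦ (aₙ − (n+1)·aₙ₊₁)` — is isomorphic to `(Ẑ ⊗ ℚ)/ℚ`, where `ℚ` embeds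
diagonally. -/
theorem stmt_13 :
    (∀ f : ℕ+ → ℤ, (∀ m n : ℕ+, ((m : ℕ) : ℤ) * f (m * n) = f n) → f = 0) ∧
    (∀ n : ℕ+, ∃ m : ℕ, ((n : ℕ+) : ℕ) ∣ m.factorial) ∧
    Nonempty (((ℕ → ℤ) ⧸ dFact.range) ≃+
      (TensorProduct ℤ Zhat ℚ ⧸ Qdiag.range)) := by
  exact stmt_13'
end

section
/- Let 0 → F → W → E' → 0 and 0 → E → W → F' → G → G' → 0 be exact sequences in an abelian category (with the same middle object W), and suppose the composite F → W → F' is injective (a monomorphism). Then the composite E → W → E' is injective, and there is an exact sequence 0 → coker(E ↪ E') → coker(F ↪ F') → ker(G ↠ G') → 0. -/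
/-- Let `0 → F →ⁱ W →^q E' → 0` and `0 → E →ʲ W →ʳ F' →ˢ G →ᵗ G' → 0` be
exact sequences of abelian groups with the same middle object `W`, and suppose the composite
`F → W → F'` is injective. Then the composite `E → W → E'` is injective, and there is an exact
sequence `0 → coker(E ↪ E') → coker(F ↪ F') → ker(G ↠ G') → 0`, where the maps are the
induced ones: `α` is induced by `w ↦ r w` via `q`, and `β` is induced by `s`. -/
theorem stmt_15 (F W E' E F' G G' : Type*)
    [AddCommGroup F] [AddCommGroup W] [AddCommGroup E'] [AddCommGroup E]
    [AddCommGroup F'] [AddCommGroup G] [AddCommGroup G']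
    (i : F →+ W) (q : W →+ E')
    (j : E →+ W) (r : W →+ F') (s : F' →+ G) (t : G →+ G')
    (hi : Function.Injective i) (hiq : Function.Exact i q) (hq : Function.Surjective q)
    (hj : Function.Injective j) (hjr : Function.Exact j r) (hrs : Function.Exact r s)
    (hst : Function.Exact s t) (ht : Function.Surjective t)
    (hri : Function.Injective (r.comp i)) :
    Function.Injective (q.comp j) ∧
    ∃ (α : E' ⧸ (q.comp j).range →+ F' ⧸ (r.comp i).range)
      (β : F' ⧸ (r.comp i).range →+ G),
      -- `α` is induced by the given data: it sends the class of `q w` to the class of `r w`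
      (∀ w : W, α (QuotientAddGroup.mk (q w)) = QuotientAddGroup.mk (r w)) ∧
      -- `β` is induced by `s`
      (∀ f' : F', β (QuotientAddGroup.mk f') = s f') ∧
      -- exactness of `0 → coker(E ↪ E') → coker(F ↪ F') → ker(G ↠ G') → 0`
      Function.Injective α ∧
      Function.Exact α β ∧
      (∀ c, t (β c) = 0) ∧
      (∀ g : G, t g = 0 → ∃ c, β c = g) := by
  classical
  have hqj : Function.Injective (q.comp j) := by
    rw [injective_iff_map_eq_zero]
    intro e he
    obtain ⟨f, hf⟩ := (hiq (j e)).mp he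
    have hrje : r (j e) = 0 := (hjr (j e)).mpr ⟨e, rfl⟩
    have hf0 : f = 0 := by
      rw [injective_iff_map_eq_zero] at hri
      exact hri f (by simpa [AddMonoidHom.comp_apply, hf] using hrje)
    apply hj
    rw [map_zero, ← hf, hf0, map_zero]
  refine ⟨hqj, ?_⟩
  set N := (q.comp j).range with hN
  set M := (r.comp i).range with hM
  have key : ∀ w w' : W, q w = q w' →
      (QuotientAddGroup.mk (r w) : F' ⧸ M) = QuotientAddGroup.mk (r w') := by
    intro w w' h
    rw [QuotientAddGroup.eq]
    obtain ⟨f, hf⟩ := (hiq (w' - w)).mp (by simp [map_sub, h])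
    exact ⟨f, by rw [AddMonoidHom.comp_apply, hf, map_sub, sub_eq_neg_add]⟩
  let σ : E' → W := Function.surjInv hq
  have hσ : ∀ e', q (σ e') = e' := fun e' => Function.surjInv_eq hq e'
  let φ : E' →+ F' ⧸ M :=
    { toFun := fun e' => QuotientAddGroup.mk (r (σ e'))
      map_zero' := by
        have := key (σ 0) 0 (by simp [hσ])
        simpa using this
      map_add' := fun a b => by
        have := key (σ (a + b)) (σ a + σ b) (by simp [hσ])
        simpa [map_add] using this }
  have hφ : ∀ w, φ (q w) = QuotientAddGroup.mk (r w) := fun w => key (σ (q w)) w (hσ _)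
  have hαwd : ∀ x ∈ N, φ x = 0 := by
    rintro _ ⟨e, rfl⟩
    rw [AddMonoidHom.comp_apply, hφ]
    have : r (j e) = 0 := (hjr _).mpr ⟨e, rfl⟩
    simp [this]
  let α : E' ⧸ N →+ F' ⧸ M := QuotientAddGroup.lift N φ hαwd
  have hβwd : ∀ x ∈ M, s x = 0 := by
    rintro _ ⟨f, rfl⟩
    exact (hrs _).mpr ⟨i f, rfl⟩
  let β : F' ⧸ M →+ G := QuotientAddGroup.lift M s hβwd
  have hα : ∀ w : W, α (QuotientAddGroup.mk (q w)) = QuotientAddGroup.mk (r w) := fun w => hφ w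
  have hβ : ∀ f' : F', β (QuotientAddGroup.mk f') = s f' := fun _ => rfl
  refine ⟨α, β, hα, hβ, ?_, ?_, ?_, ?_⟩
  · rw [injective_iff_map_eq_zero]
    intro c hc
    induction c using QuotientAddGroup.induction_on with
    | H e' =>
      obtain ⟨w, rfl⟩ := hq e'
      rw [hα, QuotientAddGroup.eq_zero_iff] at hc
      obtain ⟨f, hf⟩ := hc
      have hrw : r (w - i f) = 0 := by
        rw [map_sub, ← AddMonoidHom.comp_apply, hf, sub_self]
      obtain ⟨e, he⟩ := (hjr _).mp hrw
      rw [QuotientAddGroup.eq_zero_iff]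
      refine ⟨e, ?_⟩
      have hqif : q (i f) = 0 := (hiq _).mpr ⟨f, rfl⟩
      rw [AddMonoidHom.comp_apply, he, map_sub, hqif, sub_zero]
  · intro c
    constructor
    · intro hc
      induction c using QuotientAddGroup.induction_on with
      | H f' =>
        rw [hβ] at hc
        obtain ⟨w, rfl⟩ := (hrs f').mp hc
        exact ⟨QuotientAddGroup.mk (q w), hα w⟩
    · rintro ⟨d, rfl⟩
      induction d using QuotientAddGroup.induction_on with
      | H e' =>
        obtain ⟨w, rfl⟩ := hq e'
        rw [hα, hβ]
        exact (hrs _).mpr ⟨w, rfl⟩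
  · intro c
    induction c using QuotientAddGroup.induction_on with
    | H f' =>
      rw [hβ]
      exact (hst _).mpr ⟨f', rfl⟩
  · intro g hg
    obtain ⟨f', rfl⟩ := (hst g).mp hg
    exact ⟨QuotientAddGroup.mk f', hβ f'⟩
end

section
/- Let A be an abelian group possessing a divisible subgroup D such that A/D is killed by multiplication by some positive integer N. Then the natural map A/D → lim_n A/nA (inverse limit over positive integers n ordered by divisibility, with the natural projections A/mnA → A/nA) is an isomorphism; in particular the profinite-style completion lim_n A/nA of A equals the quotient of A by its maximal divisible subgroup. -/
/-- Let `A` be an abelian group with a divisible subgroup `D` such that `A/D`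
is killed by multiplication by some positive integer `N`. Then the natural map
`A/D → lim_n A/nA` (inverse limit over positive integers ordered by divisibility, with the
natural projections as transition maps) is an isomorphism: two elements of `A` have the same
image in every `A/nA` iff they differ by an element of `D` (injectivity of the induced map,
together with well-definedness), and every compatible system in `lim_n A/nA` comes from an
element of `A` (surjectivity). -/
theorem stmt_19 (A : Type*) [AddCommGroup A] (D : AddSubgroup A)
    (hdiv : ∀ n : ℕ, 0 < n → ∀ x ∈ D, ∃ y ∈ D, (n : ℤ) • y = x)
    (N : ℕ) (hN : 0 < N) (hkill : ∀ a : A, (N : ℤ) • a ∈ D) :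
    let S : ℕ+ → AddSubgroup A := fun n => (smulAddHom ℤ A ((n : ℕ) : ℤ)).range
    (∀ a b : A,
      (∀ n : ℕ+, (QuotientAddGroup.mk a : A ⧸ S n) = QuotientAddGroup.mk b) ↔ a - b ∈ D) ∧
    (∀ c : ∀ n : ℕ+, A ⧸ S n,
      (∀ m n : ℕ+, ∀ a : A, (QuotientAddGroup.mk a : A ⧸ S (m * n)) = c (m * n) →
        (QuotientAddGroup.mk a : A ⧸ S n) = c n) →
      ∃ a : A, ∀ n : ℕ+, (QuotientAddGroup.mk a : A ⧸ S n) = c n) := by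
  intro S
  set NN : ℕ+ := ⟨N, hN⟩ with hNN
  -- membership in S n
  have hSmem : ∀ (n : ℕ+) (x : A), x ∈ S n ↔ ∃ y : A, ((n : ℕ) : ℤ) • y = x := by
    intro n x
    exact (smulAddHom ℤ A ((n : ℕ) : ℤ)).mem_range
  -- S NN ⊆ D
  have hSND : ∀ x : A, x ∈ S NN → x ∈ D := by
    intro x hx
    obtain ⟨y, hy⟩ := (hSmem NN x).1 hx
    rw [← hy]
    exact hkill y
  -- D ⊆ S n
  have hDS : ∀ (n : ℕ+) (x : A), x ∈ D → x ∈ S n := by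
    intro n x hx
    obtain ⟨y, _, hyx⟩ := hdiv n n.2 x hx
    exact (hSmem n x).2 ⟨y, hyx⟩
  constructor
  · intro a b
    constructor
    · intro h
      have h2 : -a + b ∈ S NN := (QuotientAddGroup.eq).1 (h NN)
      have h3 : -a + b ∈ D := hSND _ h2
      have h4 := D.neg_mem h3
      simpa [neg_add_rev, sub_eq_add_neg, add_comm] using h4
    · intro h n
      rw [QuotientAddGroup.eq]
      apply hDS
      have : -(a - b) ∈ D := D.neg_mem h
      simpa [neg_sub, sub_eq_add_neg, add_comm] using this
  · intro c hc
    obtain ⟨a, ha⟩ := QuotientAddGroup.mk_surjective (c NN)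
    refine ⟨a, fun n => ?_⟩
    obtain ⟨b, hb⟩ := QuotientAddGroup.mk_surjective (c (NN * n))
    have h1 : (QuotientAddGroup.mk b : A ⧸ S n) = c n := hc NN n b hb
    have h2 : (QuotientAddGroup.mk b : A ⧸ S NN) = c NN := by
      refine hc n NN b ?_
      rw [mul_comm]
      exact hb
    have h3 : -b + a ∈ S NN := (QuotientAddGroup.eq).1 (h2.trans ha.symm)
    have h4 : -b + a ∈ S n := hDS n _ (hSND _ h3)
    exact ((QuotientAddGroup.eq).2 h4).symm.trans h1
end
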